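/- arXiv:2205.08562 — 2 statements merged into one kernel-verified Lean document; each statement's English description precedes it below -/
import Mathlib

section
/- Let r^1,...,r^T ∈ [-1,1]^N be reward vectors, β^1,...,β^T ∈ Δ([N]) be distributions, and π : [N] → [N] a swap function such that Σ_t Σ_j β^t_j r^t_{π(j)} − Σ_t Σ_j β^t_j r^t_j = R. Define a bimatrix game with optimizer actions [T] and learner actions [N] by u_L(i,j) = r^i_j and u_O(i,j) = (r^i_{π(j)} − r^i_j)/2. Then for any mixed strategy α ∈ Δ([T]) of the optimizer and any best response j ∈ [N] of the learner (maximizing u_L(α,·)), we have u_O(α,j) ≤ 0; hence the Stackelberg value of this game is at most 0, while the optimizer playing action t in round t against the sequence β^t obtains total payoff R/2. -/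
open Finset

theorem stmt0 (T N : ℕ) (r : Fin T → Fin N → ℝ)
    (hr : ∀ t j, |r t j| ≤ 1)
    (β : Fin T → Fin N → ℝ)
    (hβ0 : ∀ t j, 0 ≤ β t j) (hβ1 : ∀ t, ∑ j, β t j = 1)
    (π : Fin N → Fin N) (R : ℝ)
    (hR : (∑ t, ∑ j, β t j * r t (π j)) - (∑ t, ∑ j, β t j * r t j) = R)
    (uL uO : Fin T → Fin N → ℝ)
    (huL : ∀ i j, uL i j = r i j)
    (huO : ∀ i j, uO i j = (r i (π j) - r i j) / 2) :
    (∀ α : Fin T → ℝ, (∀ i, 0 ≤ α i) → (∑ i, α i = 1) →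
      ∀ j : Fin N, (∀ j' : Fin N, ∑ i, α i * uL i j' ≤ ∑ i, α i * uL i j) →
        ∑ i, α i * uO i j ≤ 0) ∧
    (∑ t, ∑ j, β t j * uO t j) = R / 2 := by
  constructor
  · intro α hα0 hα1 j hbr
    have h := hbr (π j)
    simp only [huL, huO] at h ⊢
    have : ∑ i, α i * ((r i (π j) - r i j) / 2)
        = (∑ i, α i * r i (π j) - ∑ i, α i * r i j) / 2 := by
      rw [← Finset.sum_sub_distrib]
      rw [Finset.sum_div]
      congr 1; ext i; ring
    rw [this]
    linarith
  · simp only [huO]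
    have : ∀ t, ∑ j, β t j * ((r t (π j) - r t j) / 2)
        = (∑ j, β t j * r t (π j) - ∑ j, β t j * r t j) / 2 := by
      intro t
      rw [← Finset.sum_sub_distrib, Finset.sum_div]
      congr 1; ext j; ring
    simp only [this]
    rw [← Finset.sum_div, Finset.sum_sub_distrib]
    rw [hR]
end

section
/- Let P ⊆ [-1,1]^d be a polytope, r^1,...,r^T ∈ [-1,1]^d, x^1,...,x^T ∈ P, and M a linear map with M(P) ⊆ P satisfying Σ_t ⟨r^t, M x^t⟩ − Σ_t ⟨r^t, x^t⟩ = R. Define the P-game with optimizer action set Q = { (y, (1/(λ+1))(M−I)^⊤ y) : y ∈ [-1,1]^d } where λ ≥ ||M||_1. Then: (a) Q ⊆ [-1,1]^d × [-1,1]^d; (b) the Stackelberg value of this game is at most 0 (for any (r, s) ∈ Q and any learner best response x maximizing ⟨r,x⟩ over P, the optimizer payoff ⟨s,x⟩ is ≤ 0); and (c) the optimizer playing (r^t, (1/(λ+1))(M−I)^⊤ r^t) in round t against the sequence x^t obtains total payoff R/(λ+1). -/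
open Finset

/-- Standard inner product on `Fin d → ℝ`. -/
def dot {d : ℕ} (a b : Fin d → ℝ) : ℝ := ∑ i, a i * b i

lemma key {d : ℕ} (M : Matrix (Fin d) (Fin d) ℝ) (y z : Fin d → ℝ) :
    dot ((M - 1).transpose.mulVec y) z = dot y (M.mulVec z) - dot y z := by
  simp only [dot, Matrix.mulVec, dotProduct, Matrix.transpose_apply,
    Matrix.sub_apply, Matrix.one_apply, Finset.mul_sum, Finset.sum_mul,
    ← Finset.sum_sub_distrib]
  rw [Finset.sum_comm]
  refine Finset.sum_congr rfl fun j _ => ?_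
  simp only [sub_mul, Finset.sum_sub_distrib]
  congr 1
  · exact Finset.sum_congr rfl fun i _ => by ring
  · simp [ite_mul]

lemma smuldot {d : ℕ} (c : ℝ) (v z : Fin d → ℝ) : dot (c • v) z = c * dot v z := by
  simp [dot, Finset.mul_sum, mul_assoc]

theorem stmt16 (d T : ℕ) (V : Finset (Fin d → ℝ))
    (hV : ∀ v ∈ V, ∀ i, |v i| ≤ 1)
    (M : Matrix (Fin d) (Fin d) ℝ)
    (hMP : ∀ x ∈ convexHull ℝ (V : Set (Fin d → ℝ)),
      M.mulVec x ∈ convexHull ℝ (V : Set (Fin d → ℝ)))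
    (lam : ℝ) (hlam : ∀ j, ∑ i, |M i j| ≤ lam)
    (r x : Fin T → Fin d → ℝ) (hr : ∀ t i, |r t i| ≤ 1)
    (hx : ∀ t, x t ∈ convexHull ℝ (V : Set (Fin d → ℝ)))
    (R : ℝ)
    (hR : (∑ t, dot (r t) (M.mulVec (x t))) - (∑ t, dot (r t) (x t)) = R) :
    (∀ y : Fin d → ℝ, (∀ i, |y i| ≤ 1) →
      ∀ i, |((1 / (lam + 1)) • (Matrix.transpose (M - 1)).mulVec y) i| ≤ 1) ∧
    (∀ y : Fin d → ℝ, (∀ i, |y i| ≤ 1) →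
      ∀ z ∈ convexHull ℝ (V : Set (Fin d → ℝ)),
        (∀ z' ∈ convexHull ℝ (V : Set (Fin d → ℝ)), dot y z' ≤ dot y z) →
        dot ((1 / (lam + 1)) • (Matrix.transpose (M - 1)).mulVec y) z ≤ 0) ∧
    (∑ t, dot ((1 / (lam + 1)) • (Matrix.transpose (M - 1)).mulVec (r t)) (x t)) = R / (lam + 1) := by
  rcases Nat.eq_zero_or_pos d with hd | hd
  · subst hd
    have hdot : ∀ (a b : Fin 0 → ℝ), dot a b = 0 := fun a b => by simp [dot]
    have hR0 : R = 0 := by simp [hdot] at hR; linarith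
    exact ⟨fun y hy i => i.elim0, fun y hy z hz hb => le_of_eq (hdot _ _),
      by simp [hdot, hR0]⟩
  · have hlam0 : 0 ≤ lam :=
      le_trans (Finset.sum_nonneg fun i _ => abs_nonneg _) (hlam ⟨0, hd⟩)
    have hl1 : (0:ℝ) < lam + 1 := by linarith
    have hc : (0:ℝ) ≤ 1 / (lam + 1) := by positivity
    refine ⟨?_, ?_, ?_⟩
    · intro y hy i
      have hvb : |((M - 1).transpose.mulVec y) i| ≤ lam + 1 := by
        have h1 : |∑ j, (M - 1).transpose i j * y j| ≤
            ∑ j, (|M j i| + if j = i then 1 else 0) := by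
          refine le_trans (Finset.abs_sum_le_sum_abs _ _) (Finset.sum_le_sum fun j _ => ?_)
          rw [abs_mul]
          calc |(M - 1).transpose i j| * |y j| ≤ |(M - 1).transpose i j| * 1 :=
                mul_le_mul_of_nonneg_left (hy j) (abs_nonneg _)
            _ = |M j i - if j = i then 1 else 0| := by
                simp [Matrix.transpose_apply, Matrix.sub_apply, Matrix.one_apply]
            _ ≤ |M j i| + |if j = i then (1:ℝ) else 0| := abs_sub _ _
            _ = |M j i| + if j = i then 1 else 0 := by
                congr 1; by_cases h : j = i <;> simp [h]
        calc |((M - 1).transpose.mulVec y) i| ≤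
              ∑ j, (|M j i| + if j = i then 1 else 0) := h1
          _ = (∑ j, |M j i|) + 1 := by rw [Finset.sum_add_distrib]; simp
          _ ≤ lam + 1 := by linarith [hlam i]
      have : |((1 / (lam + 1)) • (M - 1).transpose.mulVec y) i| =
          (1 / (lam + 1)) * |((M - 1).transpose.mulVec y) i| := by
        rw [Pi.smul_apply, smul_eq_mul, abs_mul, abs_of_nonneg hc]
      rw [this]
      calc (1 / (lam + 1)) * |((M - 1).transpose.mulVec y) i| ≤
            (1 / (lam + 1)) * (lam + 1) := mul_le_mul_of_nonneg_left hvb hc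
        _ = 1 := one_div_mul_cancel (ne_of_gt hl1)
    · intro y hy z hz hb
      rw [smuldot, key]
      have h1 : dot y (M.mulVec z) ≤ dot y z := hb _ (hMP z hz)
      have : dot y (M.mulVec z) - dot y z ≤ 0 := by linarith
      exact mul_nonpos_of_nonneg_of_nonpos hc this
    · have : (∑ t, dot ((1 / (lam + 1)) • (M - 1).transpose.mulVec (r t)) (x t)) =
          (1 / (lam + 1)) * R := by
        rw [← hR, ← Finset.sum_sub_distrib, Finset.mul_sum]
        exact Finset.sum_congr rfl fun t _ => by rw [smuldot, key]
      rw [this, one_div, inv_mul_eq_div]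
end
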